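/- Let A be a compactly supported 2-form on Minkowski space ℝ^{3,1} and suppose A¹, A² are 1-forms satisfying δA¹ = 0, δA² = 0, □A¹ = ∗dA, and □A² = δA, where □ = δd + dδ. Then ∗dA¹ + dA² = A + h where □h = 0 and δh = 0, ∗dh components are harmonic; in particular if the only solution of □h = 0 with appropriate support (advanced or retarded) is h = 0, then ∗dA¹ + dA² = A. -/
import Mathlib


/-- repercussion equation for Maxwell theory, abstract de Rham model:
given a compactly supported 2-form `A` and 1-forms `A¹`, `A²` with `δA¹ = 0`, `δA² = 0`,
`□A¹ = ∗dA`, `□A² = δA` (`□ = δd + dδ`), the 2-form `h = ∗dA¹ + dA² − A` satisfies `□h = 0`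
and `δh = 0`; in particular, if the only such solution (with the appropriate advanced or
retarded support) is `h = 0`, then `∗dA¹ + dA² = A`. -/
theorem maxwell_repercussion_equation
    (L0 L1 L2 L3 : Type*)
    [AddCommGroup L0] [Module ℝ L0] [AddCommGroup L1] [Module ℝ L1]
    [AddCommGroup L2] [Module ℝ L2] [AddCommGroup L3] [Module ℝ L3]
    (d0 : L0 →ₗ[ℝ] L1) (d1 : L1 →ₗ[ℝ] L2) (d2 : L2 →ₗ[ℝ] L3)
    (s1 : L1 →ₗ[ℝ] L3) (s2 : L2 →ₗ[ℝ] L2) (s3 : L3 →ₗ[ℝ] L1)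
    -- d² = 0
    (hd10 : d1.comp d0 = 0) (hd21 : d2.comp d1 = 0)
    -- ∗² = −1 on 2-forms, ∗∗ = 1 between 1- and 3-forms
    (hs22 : s2.comp s2 = -LinearMap.id) (hs13 : s1.comp s3 = LinearMap.id)
    (hs31 : s3.comp s1 = LinearMap.id)
    -- codifferentials δ = ∗d∗ and the d'Alembertians □ = δd + dδ
    (δ2 : L2 →ₗ[ℝ] L1) (hδ2 : δ2 = s3.comp (d2.comp s2))
    (δ1 : L1 →ₗ[ℝ] L0) (δ3 : L3 →ₗ[ℝ] L2) (hδ3 : δ3 = s2.comp (d1.comp s3))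
    (box1 : L1 →ₗ[ℝ] L1) (hbox1 : box1 = δ2.comp d1 + d0.comp δ1)
    (box2 : L2 →ₗ[ℝ] L2) (hbox2 : box2 = δ3.comp d2 + d1.comp δ2)
    (A : L2) (A1 A2 : L1)
    (h1 : δ1 A1 = 0) (h2 : δ1 A2 = 0)
    (hw1 : box1 A1 = s3 (d2 A)) (hw2 : box1 A2 = δ2 A) :
    box2 (s2 (d1 A1) + d1 A2 - A) = 0 ∧
    δ2 (s2 (d1 A1) + d1 A2 - A) = 0 ∧
    ((∀ h : L2, box2 h = 0 → δ2 h = 0 → h = 0) → s2 (d1 A1) + d1 A2 = A) := by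
  subst hδ2 hδ3 hbox1 hbox2
  simp only [LinearMap.add_apply, LinearMap.comp_apply] at hw1 hw2 ⊢
  have Hdd : ∀ x, d2 (d1 x) = (0:L3) := fun x => LinearMap.congr_fun hd21 x
  have Hss : ∀ x, s2 (s2 x) = -x := by
    intro x
    simpa using LinearMap.congr_fun hs22 x
  simp only [h1, h2, map_zero, add_zero] at hw1 hw2
  have key : s3 (d2 (s2 (s2 (d1 A1) + d1 A2 - A))) = 0 := by
    simp only [map_add, map_sub, Hss, map_neg, Hdd, map_zero, neg_zero, zero_add, hw2,
      sub_self]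
  have keyb : s3 (d2 (s2 (d1 A1) + d1 A2 - A)) = 0 := by
    simp only [map_add, map_sub, Hdd, map_zero, add_zero, zero_add, hw1, sub_self]
  have hbox : s2 (d1 (s3 (d2 (s2 (d1 A1) + d1 A2 - A)))) +
      d1 (s3 (d2 (s2 (s2 (d1 A1) + d1 A2 - A)))) = 0 := by
    rw [key, keyb]; simp
  refine ⟨hbox, key, fun H => ?_⟩
  exact sub_eq_zero.mp (H _ hbox key)
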